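/- Let λ ≠ 0 be a real number with (9+5λ)(1−3λ) < 0. Then the two roots of the quadratic factor q_λ are non-real complex conjugates, and every complex root z of q_λ satisfies |z|² = (1+λ)/(4λ) = 1/4 + 1/(4λ). -/

import Mathlib

/-- The quadratic factor of the ZeroSNet characteristic polynomial over ℂ (real parameter λ):
`q_λ(ρ) = ρ² + ((λ−3)/(4λ))ρ + (1+λ)/(4λ)`. -/
noncomputable def zerosQuadFactor (l : ℝ) (ρ : ℂ) : ℂ :=
  ρ ^ 2 + (((l : ℂ) - 3) / (4 * (l : ℂ))) * ρ + (1 + (l : ℂ)) / (4 * (l : ℂ))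

lemma zerosQuadFactor_reim (l : ℝ) (hl : l ≠ 0) (z : ℂ) (hz : zerosQuadFactor l z = 0) :
    4*l*(z.re^2 - z.im^2) + (l-3)*z.re + 1 + l = 0 ∧
    z.im * (8*l*z.re + l - 3) = 0 := by
  have hlc : (l : ℂ) ≠ 0 := Complex.ofReal_ne_zero.mpr hl
  unfold zerosQuadFactor at hz
  have h : 4*(l:ℂ)*z^2 + ((l:ℂ)-3)*z + (1+(l:ℂ)) = 0 := by
    field_simp at hz
    linear_combination hz
  rw [Complex.ext_iff] at h
  simp [Complex.add_re, Complex.mul_re, Complex.mul_im, pow_two] at h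
  constructor <;> nlinarith [h.1, h.2]

/-- If `(9+5λ)(1−3λ) < 0`, the roots of the quadratic factor `q_λ` are non-real complex
conjugates, and every complex root `z` of `q_λ` satisfies
`|z|² = (1+λ)/(4λ) = 1/4 + 1/(4λ)`. -/
theorem zerosnet_complex_roots_modulus (l : ℝ) (hl : l ≠ 0)
    (hd : (9 + 5 * l) * (1 - 3 * l) < 0) :
    (∀ z : ℂ, zerosQuadFactor l z = 0 →
      z.im ≠ 0 ∧ zerosQuadFactor l (starRingEnd ℂ z) = 0) ∧
    (∀ z : ℂ, zerosQuadFactor l z = 0 → ‖z‖ ^ 2 = (1 + l) / (4 * l)) ∧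
    (1 + l) / (4 * l) = 1 / 4 + 1 / (4 * l) := by
  have him : ∀ z : ℂ, zerosQuadFactor l z = 0 → z.im ≠ 0 := by
    intro z hz h0
    obtain ⟨h1, _⟩ := zerosQuadFactor_reim l hl z hz
    rw [h0] at h1
    have key : (8*l*z.re + l - 3)^2 = (9 + 5*l) * (1 - 3*l) := by
      linear_combination 16*l*h1
    nlinarith [sq_nonneg (8*l*z.re + l - 3)]
  refine ⟨fun z hz => ⟨him z hz, ?_⟩, fun z hz => ?_, by field_simp; ring⟩
  · have : zerosQuadFactor l (starRingEnd ℂ z) =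
        starRingEnd ℂ (zerosQuadFactor l z) := by
      simp [zerosQuadFactor, map_add, map_mul, map_div₀, map_pow, Complex.conj_ofReal, map_ofNat]
    rw [this, hz, map_zero]
  · obtain ⟨h1, h2⟩ := zerosQuadFactor_reim l hl z hz
    have h3 : 8*l*z.re + l - 3 = 0 := by
      rcases mul_eq_zero.mp h2 with h | h
      · exact absurd h (him z hz)
      · exact h
    rw [Complex.sq_norm, Complex.normSq_apply]
    field_simp
    linear_combination z.re*h3 - h1
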